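/- Let T ∈ ℝ, let a, b, σ be positive real constants, and let g₁, g₂ : (−∞,T] → ℝ be continuous functions with 0 ≤ g₁(t) ≤ g₂(t) for all t ≤ T. Suppose φ₁, φ₂ : (−∞,T] → ℝ are differentiable, satisfy φᵢ′(t) = (σ²/2)·φᵢ(t)² + a·φᵢ(t) − (1 + b·gᵢ(t)) for all t ≤ T (i = 1,2), and 0 ≤ φ₁(T) ≤ φ₂(T). Then φ₁(t) ≤ φ₂(t) for all t ≤ T. -/

import Mathlib

open Set

/-- comparison for the Riccati equation
φ′(t) = (σ²/2)·φ(t)² + a·φ(t) − (1 + b·g(t)) on (−∞,T]: if 0 ≤ g₁ ≤ g₂,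
φᵢ solves the equation with coefficient gᵢ, and 0 ≤ φ₁(T) ≤ φ₂(T), then
φ₁(t) ≤ φ₂(t) for all t ≤ T. -/
theorem riccati_comparison
    (T a b σ : ℝ) (ha : 0 < a) (hb : 0 < b) (hσ : 0 < σ)
    (g₁ g₂ : ℝ → ℝ)
    (hg₁_cont : ContinuousOn g₁ (Set.Iic T)) (hg₂_cont : ContinuousOn g₂ (Set.Iic T))
    (hg_nonneg : ∀ t ≤ T, 0 ≤ g₁ t) (hg_le : ∀ t ≤ T, g₁ t ≤ g₂ t)
    (φ₁ φ₂ : ℝ → ℝ)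
    (hφ₁ : ∀ t ≤ T, HasDerivWithinAt φ₁
      (σ ^ 2 / 2 * (φ₁ t) ^ 2 + a * φ₁ t - (1 + b * g₁ t)) (Set.Iic T) t)
    (hφ₂ : ∀ t ≤ T, HasDerivWithinAt φ₂
      (σ ^ 2 / 2 * (φ₂ t) ^ 2 + a * φ₂ t - (1 + b * g₂ t)) (Set.Iic T) t)
    (hT0 : 0 ≤ φ₁ T) (hTle : φ₁ T ≤ φ₂ T) :
    ∀ t ≤ T, φ₁ t ≤ φ₂ t := by
  intro t₀ ht₀
  -- continuity of φ₁, φ₂ on Iic T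
  have hφ₁c : ContinuousOn φ₁ (Iic T) := fun t ht => (hφ₁ t ht).continuousWithinAt
  have hφ₂c : ContinuousOn φ₂ (Iic T) := fun t ht => (hφ₂ t ht).continuousWithinAt
  -- bound on the linearized coefficient
  set c : ℝ → ℝ := fun t => σ ^ 2 / 2 * (φ₁ t + φ₂ t) + a with hc
  have hcc : ContinuousOn c (Icc t₀ T) :=
    (((hφ₁c.add hφ₂c).const_smul (σ ^ 2 / 2)).add continuousOn_const).mono Icc_subset_Iic_self
  obtain ⟨M, hM⟩ := (isCompact_Icc : IsCompact (Icc t₀ T)).exists_bound_of_continuousOn hcc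
  set K : ℝ := M + 1 with hK
  have hM0 : 0 ≤ M := le_trans (abs_nonneg _) (hM t₀ ⟨le_refl _, ht₀⟩)
  set L : ℝ := T - t₀ with hL
  have hL0 : 0 ≤ L := by simp [hL]; linarith
  -- the time-reversed difference
  set f : ℝ → ℝ := fun s => φ₁ (T - s) - φ₂ (T - s) with hf
  set f' : ℝ → ℝ := fun s =>
    (σ ^ 2 / 2 * (φ₂ (T - s)) ^ 2 + a * φ₂ (T - s) - (1 + b * g₂ (T - s))) -
    (σ ^ 2 / 2 * (φ₁ (T - s)) ^ 2 + a * φ₁ (T - s) - (1 + b * g₁ (T - s))) with hf'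
  have hmem : ∀ x ∈ Icc (0:ℝ) L, T - x ≤ T := fun x hx => by linarith [hx.1]
  have hrev : ContinuousOn (fun s : ℝ => T - s) (Icc 0 L) :=
    (continuous_const.sub continuous_id).continuousOn
  have hfc : ContinuousOn f (Icc 0 L) := by
    apply ContinuousOn.sub
    · exact hφ₁c.comp hrev hmem
    · exact hφ₂c.comp hrev hmem
  have hfd : ∀ x ∈ Ico (0:ℝ) L, HasDerivWithinAt f (f' x) (Ici x) x := by
    intro x hx
    have hxT : T - x ≤ T := by linarith [hx.1]
    have hneg : HasDerivWithinAt (fun s : ℝ => T - s) (-1) (Ici x) x :=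
      ((hasDerivWithinAt_id x (Ici x)).const_sub T)
    have hmaps : MapsTo (fun s : ℝ => T - s) (Ici x) (Iic T) := fun s hs => by
      simp only [mem_Iic]; have : (0:ℝ) ≤ s := le_trans hx.1 hs; linarith
    have h1 := (hφ₁ (T - x) hxT).comp x hneg hmaps
    have h2 := (hφ₂ (T - x) hxT).comp x hneg hmaps
    have := h1.sub h2
    refine this.congr_deriv ?_
    simp only [hf']; ring
  -- the ε-barrier argument
  have key : ∀ ε > (0:ℝ), φ₁ t₀ - φ₂ t₀ ≤ ε * Real.exp (K * L) := by
    intro ε hε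
    set B : ℝ → ℝ := fun s => ε * Real.exp (K * s) with hB
    set B' : ℝ → ℝ := fun s => ε * (Real.exp (K * s) * K) with hB'
    have hBd : ∀ x : ℝ, HasDerivAt B (B' x) x := by
      intro x
      have h0 : HasDerivAt (fun s : ℝ => K * s) K x := by
        simpa using (hasDerivAt_id x).const_mul K
      have : HasDerivAt (fun s : ℝ => Real.exp (K * s)) (Real.exp (K * x) * K) x :=
        (Real.hasDerivAt_exp (K * x)).comp x h0
      exact this.const_mul ε
    have ha0 : f 0 ≤ B 0 := by
      simp only [hf, hB, sub_zero, mul_zero, Real.exp_zero, mul_one]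
      linarith
    have hbound : ∀ x ∈ Ico (0:ℝ) L, f x = B x → f' x < B' x := by
      intro x hx hfB
      have hxT : T - x ≤ T := by linarith [hx.1]
      have hxt₀ : t₀ ≤ T - x := by
        have := hx.2; simp only [hL] at this; linarith
      have hBpos : 0 < B x := by positivity
      have hfx : φ₁ (T - x) - φ₂ (T - x) = B x := hfB
      have hkey : f' x = -(c (T - x)) * B x - b * (g₂ (T - x) - g₁ (T - x)) := by
        rw [← hfx]; simp only [hf', hc]; ring
      have hcb := hM (T - x) ⟨hxt₀, hxT⟩
      have habs := abs_le.1 hcb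
      have hg := hg_le (T - x) hxT
      rw [hkey]
      have h1 : -(c (T - x)) * B x ≤ M * B x :=
        mul_le_mul_of_nonneg_right (by linarith [habs.1]) hBpos.le
      have h2 : 0 ≤ b * (g₂ (T - x) - g₁ (T - x)) := by nlinarith
      have h3 : B' x = (M + 1) * B x := by simp only [hB, hB', hK]; ring
      rw [h3]; nlinarith
    have := image_le_of_deriv_right_lt_deriv_boundary hfc hfd ha0 hBd hbound
      (show L ∈ Icc (0:ℝ) L from ⟨hL0, le_refl _⟩)
    simpa [hf, hB, hL] using this
  have : φ₁ t₀ - φ₂ t₀ ≤ 0 := by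
    have hC : 0 < Real.exp (K * L) := Real.exp_pos _
    refine le_of_forall_pos_le_add ?_
    intro ε' hε'
    have := key (ε' / Real.exp (K * L)) (by positivity)
    rw [div_mul_cancel₀ _ hC.ne'] at this
    linarith
  linarith
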